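/- For each positive integer n, the lattice Conv(ℝⁿ) does not satisfy the identity D_n: there exist convex subsets x, y_1, …, y_{n+1} of ℝⁿ such that x ∩ convexHull(⋃_{i=1}^{n+1} y_i) ≠ convexHull(⋃_{i=1}^{n+1} (x ∩ convexHull(⋃_{j≠i} y_j))). -/

import Mathlib

/-- For each positive integer `n`, the lattice `Conv(ℝⁿ)` does not satisfy the identity `D_n`. -/
theorem conv_not_Dn (n : ℕ) (hn : 0 < n) :
    ∃ (x : Set (Fin n → ℝ)) (y : Fin (n + 1) → Set (Fin n → ℝ)),
      Convex ℝ x ∧ (∀ i, Convex ℝ (y i)) ∧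
        x ∩ convexHull ℝ (⋃ i, y i) ≠
          convexHull ℝ (⋃ i, x ∩ convexHull ℝ (⋃ j, ⋃ (_ : j ≠ i), y j)) := by
  classical
  set c : Fin n → ℝ := fun _ => ((n : ℝ) + 1)⁻¹ with hc
  set v : Fin (n + 1) → (Fin n → ℝ) := Fin.cons 0 (fun k => Pi.single k 1) with hv
  refine ⟨{c}, fun i => {v i}, convex_singleton _, fun i => convex_singleton _, ?_⟩
  have hnpos : (0 : ℝ) < (n : ℝ) + 1 := by positivity
  have hsum : ∑ i : Fin (n + 1), v i = fun _ => (1 : ℝ) := by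
    rw [hv, Fin.sum_cons, Finset.univ_sum_single (fun _ => (1 : ℝ))]
    simp
  have hcmem : c ∈ convexHull ℝ (⋃ i, ({v i} : Set (Fin n → ℝ))) := by
    have hmem := Finset.centerMass_mem_convexHull (Finset.univ : Finset (Fin (n + 1)))
      (w := fun _ => (1 : ℝ)) (z := v) (s := ⋃ i, ({v i} : Set (Fin n → ℝ)))
      (fun i _ => zero_le_one) (by simp [hnpos])
      (fun i _ => Set.mem_iUnion.2 ⟨i, Set.mem_singleton _⟩)
    have hcm : Finset.univ.centerMass (fun _ => (1 : ℝ)) v = c := by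
      rw [Finset.centerMass]
      simp only [one_smul, hsum, Finset.sum_const, Finset.card_univ, Fintype.card_fin,
        nsmul_eq_mul, mul_one]
      ext j
      simp [hc]
    rwa [hcm] at hmem
  have hfacet : ∀ i : Fin (n + 1),
      c ∉ convexHull ℝ (⋃ j, ⋃ (_ : j ≠ i), ({v j} : Set (Fin n → ℝ))) := by
    intro i
    induction i using Fin.cases with
    | zero =>
      intro hmem
      have hsub : convexHull ℝ (⋃ j, ⋃ (_ : j ≠ (0 : Fin (n+1))), ({v j} : Set (Fin n → ℝ)))
          ⊆ {w : Fin n → ℝ | ∑ j, w j = 1} := by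
        apply convexHull_min
        · intro w hw
          simp only [Set.mem_iUnion] at hw
          obtain ⟨j, hj, hw⟩ := hw
          rcases Fin.eq_zero_or_eq_succ j with h0 | ⟨k, rfl⟩
          · exact absurd h0 hj
          · simp only [Set.mem_singleton_iff] at hw
            subst hw
            simp [hv, Pi.single_apply]
        · exact convex_hyperplane
            (IsLinearMap.mk (fun a b => by simp [Finset.sum_add_distrib])
              (fun r a => by simp [Finset.mul_sum])) 1
      have := hsub hmem
      simp only [Set.mem_setOf_eq, hc] at this
      rw [Finset.sum_const, Finset.card_univ, Fintype.card_fin, nsmul_eq_mul] at this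
      field_simp at this
      linarith
    | succ k =>
      intro hmem
      have hsub : convexHull ℝ (⋃ j, ⋃ (_ : j ≠ Fin.succ k), ({v j} : Set (Fin n → ℝ)))
          ⊆ {w : Fin n → ℝ | w k = 0} := by
        apply convexHull_min
        · intro w hw
          simp only [Set.mem_iUnion] at hw
          obtain ⟨j, hj, hw⟩ := hw
          simp only [Set.mem_singleton_iff] at hw
          subst hw
          rcases Fin.eq_zero_or_eq_succ j with h0 | ⟨m, rfl⟩
          · subst h0; simp [hv]
          · have hmk : m ≠ k := fun h => hj (by rw [h])
            simp [hv, Pi.single_apply, hmk]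
        · exact convex_hyperplane
            (IsLinearMap.mk (fun a b => by simp) (fun r a => by simp)) 0
      have := hsub hmem
      simp only [Set.mem_setOf_eq, hc] at this
      exact (by positivity : ((n : ℝ) + 1)⁻¹ ≠ 0) this
  -- now conclude
  have hempty : ∀ i : Fin (n + 1),
      ({c} : Set (Fin n → ℝ)) ∩ convexHull ℝ (⋃ j, ⋃ (_ : j ≠ i), ({v j} : Set (Fin n → ℝ))) = ∅ := by
    intro i
    ext w
    simp only [Set.mem_inter_iff, Set.mem_singleton_iff, Set.mem_empty_iff_false, iff_false,
      not_and]
    rintro rfl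
    exact hfacet i
  intro h
  have hLHS : c ∈ ({c} : Set (Fin n → ℝ)) ∩ convexHull ℝ (⋃ i, ({v i} : Set (Fin n → ℝ))) :=
    ⟨rfl, hcmem⟩
  rw [h] at hLHS
  simp only [hempty, Set.iUnion_empty, convexHull_empty, Set.mem_empty_iff_false] at hLHS
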